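/- arXiv:2302.05931 — 4 statements merged into one kernel-verified Lean document; each statement's English description precedes it below -/
import Mathlib

section
/- If t ∈ [0,1) and |w| ≤ (2/π)(t−1)+1 with w a real number satisfying 0 ≤ w < 1, then (1−t²)/(1−w²) ≤ π/2. -/
open Real

theorem schwarz_pick_key_step (t w : ℝ) (ht0 : 0 ≤ t) (ht1 : t < 1)
    (hw0 : 0 ≤ w) (hw1 : w < 1) (hw : w ≤ (2 / π) * (t - 1) + 1) :
    (1 - t ^ 2) / (1 - w ^ 2) ≤ π / 2 := by
  have hπ0 : (0:ℝ) < π := Real.pi_pos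
  have hπ3 : (3:ℝ) < π := Real.pi_gt_three
  have hden : 0 < 1 - w ^ 2 := by nlinarith
  have hrw : π * ((2 / π) * (t - 1) + 1) = 2 * (t - 1) + π := by
    field_simp
  have hw2 : π * w ≤ 2 * (t - 1) + π := by
    calc π * w ≤ π * ((2 / π) * (t - 1) + 1) := by
          exact mul_le_mul_of_nonneg_left hw hπ0.le
      _ = 2 * (t - 1) + π := hrw
  have hA : 0 ≤ π * (1 - w) - 2 * (1 - t) := by nlinarith
  have hA' : π * (1 - w) - 2 * (1 - t) ≤ π - 2 * (1 - t) := by nlinarith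
  have hB : 0 ≤ (π * (1 - w) - 2 * (1 - t)) *
      (2 * π - 4 * (1 - t) - (π * (1 - w) - 2 * (1 - t))) := by
    apply mul_nonneg hA
    nlinarith
  have hC : 0 ≤ (1 - t) ^ 2 * (π - 2) :=
    mul_nonneg (sq_nonneg _) (by linarith)
  have key : 2 * π * (1 - t ^ 2) ≤ π ^ 2 * (1 - w ^ 2) := by nlinarith
  have key2 : 2 * (1 - t ^ 2) ≤ π * (1 - w ^ 2) := by
    have := (mul_le_mul_iff_right₀ hπ0).mp (by nlinarith : π * (2 * (1 - t ^ 2)) ≤ π * (π * (1 - w ^ 2)))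
    linarith
  rw [div_le_div_iff₀ hden (by norm_num : (0:ℝ) < 2)]
  linarith
end

section
/- Let f : 𝔻 → 𝔻 be harmonic with f(0) = 0. Then for every z ∈ 𝔻, (1 − |z|²)/(1 − |f(z)|²) ≤ π/2. -/
open Real

/-- The Laplacian `Δf = f_xx + f_yy`. -/
noncomputable def lap (f : ℂ → ℂ) (z : ℂ) : ℂ :=
  fderiv ℝ (fun w => fderiv ℝ f w 1) z 1 +
    fderiv ℝ (fun w => fderiv ℝ f w Complex.I) z Complex.I

open Metric intervalIntegral

/-- Core inequality: `π/8 * (r + r^3) ≤ arctan r` on `[0,1]`, by concavity. -/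
lemma arctan_key : ∀ r ∈ Set.Icc (0:ℝ) 1, π/8 * (r + r^3) ≤ arctan r := by
  set ψ : ℝ → ℝ := fun r => arctan r - π/8 * (r + r^3) with hψ
  have hc : ConcaveOn ℝ (Set.Icc (0:ℝ) 1) ψ := by
    apply concaveOn_of_hasDerivWithinAt2_nonpos (convex_Icc 0 1)
      (f' := fun r => 1/(1+r^2) - π/8 * (1 + 3*r^2))
      (f'' := fun r => -(2*r)/(1+r^2)^2 - π/8 * (6*r))
    · exact (Real.continuous_arctan.sub
        (continuous_const.mul (continuous_id.add (continuous_pow 3)))).continuousOn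
    · intro x _
      have h1 : HasDerivAt ψ (1/(1+x^2) - π/8 * (1 + 3*x^2)) x := by
        have h2 : HasDerivAt (fun r : ℝ => r + r^3) (1 + 3*x^2) x := by
          exact ((hasDerivAt_id' x).add (hasDerivAt_pow 3 x)).congr_deriv (by norm_num)
        have := (Real.hasDerivAt_arctan x).sub (h2.const_mul (π/8))
        exact this
      exact h1.hasDerivWithinAt
    · intro x _
      have hne : (1 + x^2) ≠ 0 := by positivity
      have h1 : HasDerivAt (fun r : ℝ => 1/(1+r^2) - π/8 * (1 + 3*r^2))
          (-(2*x)/(1+x^2)^2 - π/8 * (6*x)) x := by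
        have hinv : HasDerivAt (fun r : ℝ => (1+r^2)) (2*x) x := by
          simpa using (hasDerivAt_pow 2 x).const_add 1
        have h2 := hinv.inv hne
        have h3 : HasDerivAt (fun r : ℝ => π/8 * (1 + 3*r^2)) (π/8 * (6*x)) x := by
          have h4 : HasDerivAt (fun r : ℝ => (1 + 3*r^2)) (6*x) x := by
            have := ((hasDerivAt_pow 2 x).const_mul (3:ℝ)).const_add 1
            exact this.congr_deriv (by norm_num; ring)
          simpa using h4.const_mul (π/8)
        have h5 := h2.sub h3
        simp only [one_div]
        exact h5
      exact h1.hasDerivWithinAt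
    · intro x hx
      rw [interior_Icc] at hx
      have hx0 : (0:ℝ) < x := hx.1
      have h7 : 0 ≤ (2*x)/(1+x^2)^2 := by positivity
      have h8 : 0 ≤ π/8 * (6*x) := by positivity
      have h9 : -(2*x)/(1+x^2)^2 = -((2*x)/(1+x^2)^2) := by ring
      rw [h9]
      linarith
  intro r hr
  have h0 : ψ 0 = 0 := by simp [hψ]
  have h1 : ψ 1 = 0 := by
    simp [hψ, Real.arctan_one]; ring
  have h2 := hc.2 (Set.left_mem_Icc.2 zero_le_one) (Set.right_mem_Icc.2 zero_le_one)
    (by linarith [hr.2] : (0:ℝ) ≤ 1 - r) hr.1 (by ring : (1-r) + r = 1)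
  rw [h0, h1] at h2
  rw [show (1-r) • (0:ℝ) + r • (1:ℝ) = r by simp] at h2
  have h3 : 0 ≤ ψ r := by
    simpa using h2
  simp only [hψ, sub_nonneg] at h3
  exact h3

/-- `φ r := π/2 - (8/π) arctan(r)^2 - 1 + r^2 ≥ 0` on `[0,1]`. -/
lemma phi_nonneg : ∀ r ∈ Set.Icc (0:ℝ) 1, 0 ≤ π/2 - 8/π * arctan r ^ 2 - 1 + r^2 := by
  set φ : ℝ → ℝ := fun r => π/2 - 8/π * arctan r ^ 2 - 1 + r^2 with hφ
  have hanti : AntitoneOn φ (Set.Icc (0:ℝ) 1) := by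
    apply antitoneOn_of_hasDerivWithinAt_nonpos (convex_Icc 0 1)
      (f' := fun r => 2*r - 8/π * (2 * arctan r * (1/(1+r^2))))
    · exact (((continuous_const.sub
        (continuous_const.mul (Real.continuous_arctan.pow 2))).sub
        continuous_const).add (continuous_pow 2)).continuousOn
    · intro x _
      have ha := ((Real.hasDerivAt_arctan x).pow 2).const_mul (8/π)
      have hb := (hasDerivAt_pow 2 x).const_add (π/2 - 1)
      have hc2 : HasDerivAt (fun r : ℝ => (π/2 - 1 + r^2) - 8/π * arctan r ^2)
          (2*x - 8/π * (2 * arctan x * (1/(1+x^2)))) x := by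
        exact (hb.sub ha).congr_deriv (by push_cast; ring)
      have hφ2 : φ = fun r : ℝ => (π/2 - 1 + r^2) - 8/π * arctan r ^2 := by
        funext r; simp only [hφ]; ring
      rw [hφ2]
      exact hc2.hasDerivWithinAt
    · intro x hx
      rw [interior_Icc] at hx
      have hkey := arctan_key x ⟨hx.1.le, hx.2.le⟩
      have hp := pi_pos
      rw [sub_nonpos]
      have h2 : 8/π * (2 * arctan x * (1/(1+x^2))) = 16 * arctan x / (π * (1+x^2)) := by
        field_simp; ring
      rw [h2, le_div_iff₀ (by positivity)]
      nlinarith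
  intro r hr
  have h1 : φ 1 = 0 := by
    have hp := pi_pos
    simp only [hφ, Real.arctan_one]
    field_simp
    ring
  have h2 := hanti hr (Set.right_mem_Icc.2 zero_le_one) hr.2
  rw [h1] at h2
  exact h2

lemma sin_decomp (a b : ℝ) :
    Complex.sin (a + b*Complex.I) =
      ((Real.sin a * Real.cosh b : ℝ) : ℂ) + ((Real.cos a * Real.sinh b : ℝ) : ℂ) * Complex.I := by
  rw [Complex.sin_add, Complex.sin_mul_I, Complex.cos_mul_I,
    ← Complex.ofReal_sin, ← Complex.ofReal_cos, ← Complex.ofReal_sinh, ← Complex.ofReal_cosh]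
  push_cast
  ring

lemma cos_decomp (a b : ℝ) :
    Complex.cos (a + b*Complex.I) =
      ((Real.cos a * Real.cosh b : ℝ) : ℂ) + ((-(Real.sin a * Real.sinh b) : ℝ) : ℂ) * Complex.I := by
  rw [Complex.cos_add, Complex.sin_mul_I, Complex.cos_mul_I,
    ← Complex.ofReal_sin, ← Complex.ofReal_cos, ← Complex.ofReal_sinh, ← Complex.ofReal_cosh]
  push_cast
  ring

lemma normSq_sin_eq (a b : ℝ) :
    Complex.normSq (Complex.sin (a + b*Complex.I)) =
      (Real.sin a * Real.cosh b)^2 + (Real.cos a * Real.sinh b)^2 := by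
  rw [sin_decomp, Complex.normSq_add_mul_I]

lemma normSq_cos_eq (a b : ℝ) :
    Complex.normSq (Complex.cos (a + b*Complex.I)) =
      (Real.cos a * Real.cosh b)^2 + (Real.sin a * Real.sinh b)^2 := by
  rw [cos_decomp, Complex.normSq_add_mul_I]
  ring

lemma sin_sq_lt_cos_sq {a : ℝ} (ha : |a| < π/4) : Real.sin a ^ 2 < Real.cos a ^ 2 := by
  have h1 : Real.cos (2*a) > 0 := by
    apply Real.cos_pos_of_mem_Ioo
    constructor
    · have := abs_lt.1 ha |>.1; linarith
    · have := abs_lt.1 ha |>.2; linarith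
  rw [Real.cos_two_mul'] at h1
  linarith

lemma normSq_cos_pos {θ : ℂ} (h : |θ.re| < π/4) : 0 < Complex.normSq (Complex.cos θ) := by
  have hθ : θ = (θ.re : ℂ) + (θ.im : ℂ) * Complex.I := (Complex.re_add_im θ).symm
  rw [hθ, normSq_cos_eq]
  have hcos : 0 < Real.cos θ.re := by
    apply Real.cos_pos_of_mem_Ioo
    have := abs_lt.1 h
    have hp := pi_pos
    constructor <;> [linarith [this.1]; linarith [this.2]]
  have hch : 1 ≤ Real.cosh θ.im := Real.one_le_cosh θ.im
  have h2 : 0 < Real.cos θ.re * Real.cosh θ.im := by nlinarith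
  have h3 : 0 < (Real.cos θ.re * Real.cosh θ.im)^2 := by positivity
  nlinarith [sq_nonneg (Real.sin θ.re * Real.sinh θ.im)]

lemma cos_ne_zero'' {θ : ℂ} (h : |θ.re| < π/4) : Complex.cos θ ≠ 0 := by
  intro hc
  have := normSq_cos_pos h
  rw [hc] at this
  simp at this

lemma normSq_tan_eq {θ : ℂ} (h : |θ.re| < π/4) :
    Complex.normSq (Complex.tan θ) =
      Complex.normSq (Complex.sin θ) / Complex.normSq (Complex.cos θ) := by
  rw [Complex.tan_eq_sin_div_cos, map_div₀]

lemma abs_tan_lt_one {θ : ℂ} (h : |θ.re| < π/4) : ‖Complex.tan θ‖ < 1 := by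
  have hlt : Complex.normSq (Complex.tan θ) < 1 := by
    rw [normSq_tan_eq h, div_lt_one (normSq_cos_pos h)]
    have hθ : θ = (θ.re : ℂ) + (θ.im : ℂ) * Complex.I := (Complex.re_add_im θ).symm
    rw [hθ, normSq_sin_eq, normSq_cos_eq]
    have h1 := sin_sq_lt_cos_sq h
    have h2 := Real.cosh_sq θ.im
    nlinarith [sq_nonneg (Real.sinh θ.im)]
  rw [Complex.norm_def]
  calc Real.sqrt (Complex.normSq (Complex.tan θ)) < Real.sqrt 1 :=
        Real.sqrt_lt_sqrt (Complex.normSq_nonneg _) hlt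
    _ = 1 := Real.sqrt_one

lemma real_tan_le_abs_tan {θ : ℂ} (h : |θ.re| < π/4) (h0 : 0 ≤ θ.re) :
    Real.tan θ.re ≤ ‖Complex.tan θ‖ := by
  have habs := abs_lt.1 h
  have hp := pi_pos
  have hcos : 0 < Real.cos θ.re := by
    apply Real.cos_pos_of_mem_Ioo
    constructor <;> [linarith [habs.1]; linarith [habs.2]]
  have hsq : Real.tan θ.re ^ 2 ≤ Complex.normSq (Complex.tan θ) := by
    rw [normSq_tan_eq h, Real.tan_eq_sin_div_cos, div_pow]
    set a := θ.re with ha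
    set b := θ.im with hb
    have hθ : θ = (a : ℂ) + (b : ℂ) * Complex.I := (Complex.re_add_im θ).symm
    rw [hθ, normSq_sin_eq, normSq_cos_eq]
    have hch : 1 ≤ Real.cosh b := Real.one_le_cosh b
    have hd1 : (0:ℝ) < Real.cos a ^ 2 := by positivity
    have hd2 : (0:ℝ) < (Real.cos a * Real.cosh b)^2 + (Real.sin a * Real.sinh b)^2 := by
      have hcc : 0 < Real.cos a * Real.cosh b := by nlinarith
      nlinarith [sq_nonneg (Real.sin a * Real.sinh b), sq_nonneg (Real.cos a * Real.cosh b), pow_pos hcc 2]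
    rw [div_le_div_iff₀ hd1 hd2]
    have h1 := (sin_sq_lt_cos_sq h).le
    nlinarith [sq_nonneg (Real.sinh b), sq_nonneg (Real.sin b),
      mul_le_mul h1 h1 (sq_nonneg _) (sq_nonneg _)]
  have htn : 0 ≤ Real.tan θ.re :=
    Real.tan_nonneg_of_nonneg_of_le_pi_div_two h0 (by linarith [habs.2])
  calc Real.tan θ.re = Real.sqrt (Real.tan θ.re ^ 2) := (Real.sqrt_sq htn).symm
    _ ≤ Real.sqrt (Complex.normSq (Complex.tan θ)) := Real.sqrt_le_sqrt hsq
    _ = ‖Complex.tan θ‖ := (Complex.norm_def _).symm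

/-- Every holomorphic function on the unit ball has a primitive vanishing at 0. -/
lemma exists_primitive {h : ℂ → ℂ} (hd : DifferentiableOn ℂ h (ball (0:ℂ) 1)) :
    ∃ F : ℂ → ℂ, F 0 = 0 ∧ ∀ z ∈ ball (0:ℂ) 1, HasDerivAt F (h z) z := by
  have hcont : ContinuousOn h (ball (0:ℂ) 1) := hd.continuousOn
  have han : AnalyticOnNhd ℂ h (ball (0:ℂ) 1) := hd.analyticOnNhd isOpen_ball
  have hdercont : ContinuousOn (deriv h) (ball (0:ℂ) 1) := (han.deriv).continuousOn
  refine ⟨fun w => ∫ t in (0:ℝ)..1, w * h ((t:ℂ) * w), by simp, ?_⟩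
  intro z₀ hz₀
  rw [mem_ball_zero_iff] at hz₀
  set r : ℝ := ‖z₀‖ with hr
  have hr0 : 0 ≤ r := norm_nonneg z₀
  set ε : ℝ := (1 - r)/2 with hε
  have hεpos : 0 < ε := by rw [hε]; linarith
  set ρ : ℝ := (1 + r)/2 with hρ
  have hρ1 : ρ < 1 := by rw [hρ]; linarith
  have hρ0 : 0 ≤ ρ := by simp only [hρ]; linarith
  have hxlt : ∀ x : ℂ, x ∈ ball z₀ ε → ‖x‖ < ρ := by
    intro x hx
    have h1 := mem_ball_iff_norm.1 hx
    calc ‖x‖ = ‖x - z₀ + z₀‖ := by ring_nf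
      _ ≤ ‖x - z₀‖ + ‖z₀‖ := norm_add_le _ _
      _ < ε + r := add_lt_add_of_lt_of_le h1 le_rfl
      _ = ρ := by simp only [hε, hρ]; ring
  have hmem : ∀ x : ℂ, x ∈ ball z₀ ε → ∀ t : ℝ, t ∈ Set.Icc (0:ℝ) 1 →
      (t:ℂ) * x ∈ closedBall (0:ℂ) ρ := by
    intro x hx t ht
    rw [mem_closedBall_zero_iff]
    have hn : ‖(t:ℂ) * x‖ = |t| * ‖x‖ := by rw [norm_mul]; simp
    rw [hn, abs_of_nonneg ht.1]
    have := hxlt x hx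
    nlinarith [norm_nonneg x, ht.2, ht.1]
  have hKsub : closedBall (0:ℂ) ρ ⊆ ball (0:ℂ) 1 := closedBall_subset_ball hρ1
  have hz₀mem : z₀ ∈ ball z₀ ε := mem_ball_self hεpos
  obtain ⟨C₁, hC₁⟩ := (isCompact_closedBall (0:ℂ) ρ).exists_bound_of_continuousOn
    (hcont.mono hKsub)
  obtain ⟨C₂, hC₂⟩ := (isCompact_closedBall (0:ℂ) ρ).exists_bound_of_continuousOn
    (hdercont.mono hKsub)
  have hC₁0 : 0 ≤ C₁ := le_trans (norm_nonneg _) (hC₁ 0 (by simp [hρ0]))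
  have hC₂0 : 0 ≤ C₂ := le_trans (norm_nonneg _) (hC₂ 0 (by simp [hρ0]))
  have hιIcc : Set.uIoc (0:ℝ) 1 ⊆ Set.Icc 0 1 := by
    rw [Set.uIoc_of_le zero_le_one]; exact Set.Ioc_subset_Icc_self
  -- continuity in t
  have hin : ContinuousOn (fun t : ℝ => (t:ℂ) * z₀) (Set.Icc 0 1) :=
    (Complex.continuous_ofReal.mul continuous_const).continuousOn
  have hcont_t : ∀ x : ℂ, x ∈ ball z₀ ε →
      ContinuousOn (fun t : ℝ => x * h ((t:ℂ) * x)) (Set.Icc 0 1) := by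
    intro x hx
    apply continuousOn_const.mul
    exact hcont.comp ((Complex.continuous_ofReal.mul continuous_const).continuousOn)
      (fun t ht => hKsub (hmem x hx t ht))
  have hmapsTo : Set.MapsTo (fun t : ℝ => (t:ℂ) * z₀) (Set.Icc 0 1) (ball (0:ℂ) 1) :=
    fun t ht => hKsub (hmem z₀ hz₀mem t ht)
  have hcontF' : ContinuousOn
      (fun t : ℝ => 1 * h ((t:ℂ) * z₀) + z₀ * (deriv h ((t:ℂ) * z₀) * (t:ℂ)))
      (Set.Icc 0 1) := by
    apply (continuousOn_const.mul (hcont.comp hin hmapsTo)).add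
    exact continuousOn_const.mul
      (((hdercont.comp hin hmapsTo)).mul Complex.continuous_ofReal.continuousOn)
  have main := intervalIntegral.hasDerivAt_integral_of_dominated_loc_of_deriv_le
    (F := fun (x : ℂ) (t : ℝ) => x * h ((t:ℂ) * x))
    (F' := fun (x : ℂ) (t : ℝ) => 1 * h ((t:ℂ) * x) + x * (deriv h ((t:ℂ) * x) * (t:ℂ)))
    (x₀ := z₀) (a := 0) (b := 1) (μ := MeasureTheory.volume)
    (bound := fun _ => C₁ + C₂) (ball_mem_nhds z₀ hεpos) ?_ ?_ ?_ ?_ ?_ ?_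
  · obtain ⟨hF'int, hder⟩ := main
    have heq : ∀ t ∈ Set.uIcc (0:ℝ) 1,
        HasDerivAt (fun s : ℝ => (s:ℂ) * h ((s:ℂ) * z₀))
          (1 * h ((t:ℂ) * z₀) + (t:ℂ) * (deriv h ((t:ℂ) * z₀) * z₀)) t := by
      intro t ht
      rw [Set.uIcc_of_le zero_le_one] at ht
      have htz : (t:ℂ) * z₀ ∈ ball (0:ℂ) 1 := hKsub (hmem z₀ hz₀mem t ht)
      have hd1 : HasDerivAt h (deriv h ((t:ℂ) * z₀)) ((t:ℂ) * z₀) :=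
        (hd.differentiableAt (isOpen_ball.mem_nhds htz)).hasDerivAt
      have hinner : HasDerivAt (fun w : ℂ => w * z₀) z₀ (t:ℂ) := hasDerivAt_mul_const z₀
      have hcomp2 : HasDerivAt (fun w : ℂ => h (w * z₀)) (deriv h ((t:ℂ) * z₀) * z₀) (t:ℂ) := by
        exact hd1.comp (t:ℂ) hinner
      have he : HasDerivAt (fun w : ℂ => w * h (w * z₀))
          (1 * h ((t:ℂ) * z₀) + (t:ℂ) * (deriv h ((t:ℂ) * z₀) * z₀)) (t:ℂ) :=
        (hasDerivAt_id' (t:ℂ)).mul hcomp2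
      exact he.comp_ofReal
    have hcψ : IntervalIntegrable
        (fun t : ℝ => 1 * h ((t:ℂ) * z₀) + (t:ℂ) * (deriv h ((t:ℂ) * z₀) * z₀))
        MeasureTheory.volume 0 1 := by
      apply ContinuousOn.intervalIntegrable
      rw [Set.uIcc_of_le zero_le_one]
      apply (continuousOn_const.mul (hcont.comp hin hmapsTo)).add
      exact Complex.continuous_ofReal.continuousOn.mul
        ((hdercont.comp hin hmapsTo).mul continuousOn_const)
    have hint_eq : (∫ t in (0:ℝ)..1,
        (1 * h ((t:ℂ) * z₀) + z₀ * (deriv h ((t:ℂ) * z₀) * (t:ℂ)))) = h z₀ := by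
      rw [intervalIntegral.integral_congr
        (g := fun t : ℝ => 1 * h ((t:ℂ) * z₀) + (t:ℂ) * (deriv h ((t:ℂ) * z₀) * z₀))
        (fun t _ => by ring)]
      rw [intervalIntegral.integral_eq_sub_of_hasDerivAt heq hcψ]
      norm_num
    rw [hint_eq] at hder
    exact hder
  · -- hF_meas
    filter_upwards [ball_mem_nhds z₀ hεpos] with x hx
    exact ((hcont_t x hx).mono hιIcc).aestronglyMeasurable measurableSet_uIoc
  · -- hF_int
    apply ContinuousOn.intervalIntegrable
    rw [Set.uIcc_of_le zero_le_one]
    exact hcont_t z₀ hz₀mem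
  · -- hF'_meas
    exact ((hcontF'.mono hιIcc)).aestronglyMeasurable measurableSet_uIoc
  · -- h_bound
    apply MeasureTheory.ae_of_all
    intro t ht x hx
    have htIcc : t ∈ Set.Icc (0:ℝ) 1 := hιIcc ht
    have h1 : ‖h ((t:ℂ) * x)‖ ≤ C₁ := hC₁ _ (hmem x hx t htIcc)
    have h2 : ‖deriv h ((t:ℂ) * x)‖ ≤ C₂ := hC₂ _ (hmem x hx t htIcc)
    have hx1 : ‖x‖ ≤ 1 := (hxlt x hx).le.trans hρ1.le
    have ht1 : ‖(t:ℂ)‖ ≤ 1 := by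
      simp only [Complex.norm_real, Real.norm_eq_abs, abs_of_nonneg htIcc.1]
      exact htIcc.2
    calc ‖1 * h ((t:ℂ) * x) + x * (deriv h ((t:ℂ) * x) * (t:ℂ))‖
        ≤ ‖1 * h ((t:ℂ) * x)‖ + ‖x * (deriv h ((t:ℂ) * x) * (t:ℂ))‖ := norm_add_le _ _
      _ = ‖h ((t:ℂ) * x)‖ + ‖x‖ * (‖deriv h ((t:ℂ) * x)‖ * ‖(t:ℂ)‖) := by
          rw [norm_mul, norm_mul, norm_mul]; norm_num
      _ ≤ C₁ + C₂ := by
          have hstep : ‖x‖ * (‖deriv h ((t:ℂ) * x)‖ * ‖(t:ℂ)‖) ≤ 1 * (C₂ * 1) := by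
            apply mul_le_mul hx1 _ (by positivity) zero_le_one
            exact mul_le_mul h2 ht1 (norm_nonneg _) hC₂0
          have : ‖x‖ * (‖deriv h ((t:ℂ) * x)‖ * ‖(t:ℂ)‖) ≤ C₂ := by
            simpa using hstep
          linarith
  · -- bound integrable
    exact intervalIntegrable_const
  · -- h_diff
    apply MeasureTheory.ae_of_all
    intro t ht x hx
    have htIcc : t ∈ Set.Icc (0:ℝ) 1 := hιIcc ht
    have hmemb : (t:ℂ) * x ∈ ball (0:ℂ) 1 := hKsub (hmem x hx t htIcc)
    have hd1 : HasDerivAt h (deriv h ((t:ℂ) * x)) ((t:ℂ) * x) :=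
      (hd.differentiableAt (isOpen_ball.mem_nhds hmemb)).hasDerivAt
    have hinner : HasDerivAt (fun y : ℂ => (t:ℂ) * y) (t:ℂ) x := by
      simpa using (hasDerivAt_id x).const_mul (t:ℂ)
    have hcompo : HasDerivAt (fun y : ℂ => h ((t:ℂ) * y)) (deriv h ((t:ℂ) * x) * (t:ℂ)) x := by
      exact hd1.comp x hinner
    exact (hasDerivAt_id' x).mul hcompo

lemma clm_decomp {M : Type*} [AddCommMonoid M] [Module ℝ M] [TopologicalSpace M]
    (T : ℂ →L[ℝ] M) (k : ℂ) : T k = k.re • T 1 + k.im • T Complex.I := by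
  have hk : k = k.re • (1:ℂ) + k.im • Complex.I := by
    simp [Complex.real_smul]
  conv_lhs => rw [hk]
  rw [map_add, map_smul, map_smul]

lemma heinz_re (g : ℂ → ℂ)
    (hg : ContDiffOn ℝ 2 g (ball (0:ℂ) 1))
    (hlap : ∀ z ∈ ball (0:ℂ) 1, lap g z = 0)
    (hb : ∀ z ∈ ball (0:ℂ) 1, ‖g z‖ < 1)
    (hg0 : g 0 = 0) :
    ∀ z ∈ ball (0:ℂ) 1, π/4 * (g z).re ≤ arctan ‖z‖ := by
  have hball : IsOpen (ball (0:ℂ) 1) := isOpen_ball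
  set D : ℂ → ℂ →L[ℝ] ℂ := fun w => fderiv ℝ g w with hD
  have hgd : ∀ w ∈ ball (0:ℂ) 1, DifferentiableAt ℝ g w := fun w hw =>
    (hg.contDiffAt (hball.mem_nhds hw)).differentiableAt (by norm_num)
  have hDd : ∀ w ∈ ball (0:ℂ) 1, DifferentiableAt ℝ D w := fun w hw =>
    ((hg.contDiffAt (hball.mem_nhds hw)).fderiv_right (m := 1) (by norm_num)).differentiableAt (by norm_num)
  let ev1 : (ℂ →L[ℝ] ℂ) →L[ℝ] ℂ := ContinuousLinearMap.apply ℝ ℂ (1:ℂ)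
  let evI : (ℂ →L[ℝ] ℂ) →L[ℝ] ℂ := ContinuousLinearMap.apply ℝ ℂ Complex.I
  let reC : ℂ →L[ℝ] ℂ := Complex.ofRealCLM.comp Complex.reCLM
  let ψ : (ℂ →L[ℝ] ℂ) →L[ℝ] ℂ := reC.comp ev1 - Complex.I • (reC.comp evI)
  have hψ : ∀ T : ℂ →L[ℝ] ℂ,
      ψ T = ((T 1).re : ℂ) - Complex.I * ((T Complex.I).re : ℂ) := by
    intro T
    simp [ψ, reC, ev1, evI, ContinuousLinearMap.sub_apply,
      ContinuousLinearMap.smul_apply, smul_eq_mul]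
  set h : ℂ → ℂ :=
    fun w => (((D w) 1).re : ℂ) - Complex.I * (((D w) Complex.I).re : ℂ) with hh
  have hfun2 : h = fun w => ψ (D w) := by
    funext w; rw [hψ]
  -- h is holomorphic
  have hhol : DifferentiableOn ℂ h (ball (0:ℂ) 1) := by
    intro z hz
    have hA : HasFDerivAt D (fderiv ℝ D z) z := (hDd z hz).hasFDerivAt
    set A := fderiv ℝ D z with hAdef
    have hev : ∀ᶠ y in nhds z, HasFDerivAt g (D y) y := by
      filter_upwards [hball.mem_nhds hz] with y hy
      exact (hgd y hy).hasFDerivAt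
    have hsymm : ∀ v w : ℂ, A v w = A w v :=
      second_derivative_symmetric_of_eventually hev hA
    have hA11 : (A 1) 1 + (A Complex.I) Complex.I = 0 := by
      have c1 : HasFDerivAt (fun w => fderiv ℝ g w (1:ℂ)) (ev1.comp A) z := by
        have hc := ev1.hasFDerivAt.comp z hA
        have he : (⇑ev1 ∘ D) = fun w => fderiv ℝ g w (1:ℂ) := by
          funext w; simp [ev1, Function.comp]; rfl
        rwa [he] at hc
      have c2 : HasFDerivAt (fun w => fderiv ℝ g w Complex.I) (evI.comp A) z := by
        have hc := evI.hasFDerivAt.comp z hA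
        have he : (⇑evI ∘ D) = fun w => fderiv ℝ g w Complex.I := by
          funext w; simp [evI, Function.comp]; rfl
        rwa [he] at hc
      have hl := hlap z hz
      unfold lap at hl
      rw [c1.fderiv, c2.fderiv] at hl
      simpa [ev1, evI] using hl
    have hCR : ψ (A Complex.I) = Complex.I * ψ (A 1) := by
      rw [hψ, hψ]
      have hs1 : (A Complex.I) 1 = (A 1) Complex.I := hsymm Complex.I 1
      have hharm_re : ((A Complex.I) Complex.I).re = -(((A 1) 1).re) := by
        have h5 := congrArg Complex.re hA11
        simp only [Complex.add_re, Complex.zero_re] at h5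
        linarith
      rw [hs1, hharm_re]
      push_cast
      linear_combination ((((A 1) Complex.I).re : ℂ)) * Complex.I_sq
    have hlin : ∀ k : ℂ, ψ (A k) = ψ (A 1) * k := by
      intro k
      rw [clm_decomp A k, map_add, map_smul, map_smul, hCR]
      simp only [Complex.real_smul, smul_eq_mul]
      conv_rhs => rw [← Complex.re_add_im k]
      ring
    have hhF : HasFDerivAt h (ψ.comp A) z := by
      have hc := ψ.hasFDerivAt.comp z hA
      have he : (⇑ψ ∘ D) = h := by
        funext w; rw [hfun2]; simp [Function.comp]
      rwa [he] at hc
    have hrestrict : ((ψ (A 1)) • (1 : ℂ →L[ℂ] ℂ)).restrictScalars ℝ = ψ.comp A := by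
      apply ContinuousLinearMap.ext
      intro k
      simp only [ContinuousLinearMap.coe_restrictScalars',
        ContinuousLinearMap.smul_apply, ContinuousLinearMap.one_apply,
        ContinuousLinearMap.coe_comp', Function.comp_apply, smul_eq_mul]
      exact (hlin k).symm
    exact (hasFDerivAt_of_restrictScalars ℝ hhF hrestrict).differentiableAt.differentiableWithinAt
  -- primitive
  obtain ⟨F, hF0, hFd⟩ := exists_primitive hhol
  -- real parts agree
  have hre : ∀ w ∈ ball (0:ℂ) 1, (F w).re = (g w).re := by
    have hdiffq : ∀ w ∈ ball (0:ℂ) 1,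
        HasFDerivWithinAt (fun w => (F w).re - (g w).re) (0 : ℂ →L[ℝ] ℝ)
          (ball (0:ℂ) 1) w := by
      intro w hw
      have hFw : HasFDerivAt F
          ((ContinuousLinearMap.smulRight (1 : ℂ →L[ℂ] ℂ) (h w)).restrictScalars ℝ) w :=
        ((hFd w hw).hasFDerivAt).restrictScalars ℝ
      have hq : HasFDerivAt (fun w => (F w).re - (g w).re)
          (Complex.reCLM.comp
              ((ContinuousLinearMap.smulRight (1 : ℂ →L[ℂ] ℂ) (h w)).restrictScalars ℝ)
            - Complex.reCLM.comp (D w)) w :=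
        (Complex.reCLM.hasFDerivAt.comp w hFw).sub
          (Complex.reCLM.hasFDerivAt.comp w (hgd w hw).hasFDerivAt)
      have hzero : (Complex.reCLM.comp
              ((ContinuousLinearMap.smulRight (1 : ℂ →L[ℂ] ℂ) (h w)).restrictScalars ℝ)
            - Complex.reCLM.comp (D w)) = 0 := by
        apply ContinuousLinearMap.ext
        intro k
        simp only [ContinuousLinearMap.coe_sub', Pi.sub_apply,
          ContinuousLinearMap.coe_comp', Function.comp_apply,
          ContinuousLinearMap.coe_restrictScalars',
          ContinuousLinearMap.smulRight_apply, ContinuousLinearMap.one_apply,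
          Complex.reCLM_apply, ContinuousLinearMap.zero_apply]
        rw [clm_decomp (D w) k]
        have hsm : k • h w = k * h w := rfl
        rw [hsm]
        simp only [hh, Complex.mul_re, Complex.sub_re, Complex.sub_im,
          Complex.ofReal_re, Complex.ofReal_im, Complex.mul_im,
          Complex.I_re, Complex.I_im, Complex.add_re, Complex.real_smul]
        ring
      rw [hzero] at hq
      exact hq.hasFDerivWithinAt
    intro w hw
    have hbound : ∀ x ∈ ball (0:ℂ) 1, ‖(0 : ℂ →L[ℝ] ℝ)‖ ≤ (0:ℝ) := fun x _ => by simp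
    have hconst := Convex.norm_image_sub_le_of_norm_hasFDerivWithin_le
      hdiffq hbound (convex_ball (0:ℂ) 1) (mem_ball_self one_pos) hw
    simp only [hF0, hg0, Complex.zero_re, sub_zero, sub_self, zero_mul,
      Real.norm_eq_abs] at hconst
    have habs : |(F w).re - (g w).re| ≤ 0 := hconst
    have := abs_nonpos_iff.1 habs
    linarith [sub_eq_zero.1 this]
  -- the strip bound
  have hstrip : ∀ w ∈ ball (0:ℂ) 1, |(F w).re| < 1 := by
    intro w hw
    rw [hre w hw]
    exact lt_of_le_of_lt (Complex.abs_re_le_norm (g w)) (hb w hw)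
  set G : ℂ → ℂ := fun w => Complex.tan ((↑(π/4) : ℂ) * F w) with hG
  have hθre : ∀ w : ℂ, ((↑(π/4):ℂ) * F w).re = π/4 * (F w).re := by
    intro w
    simp [Complex.mul_re]
  have hθlt : ∀ w ∈ ball (0:ℂ) 1, |((↑(π/4):ℂ) * F w).re| < π/4 := by
    intro w hw
    rw [hθre, abs_mul, abs_of_pos (by positivity : (0:ℝ) < π/4)]
    have hs := hstrip w hw
    nlinarith [pi_pos]
  have hGdiff : DifferentiableOn ℂ G (ball (0:ℂ) 1) := by
    intro w hw
    apply DifferentiableAt.differentiableWithinAt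
    exact (Complex.differentiableAt_tan.2 (cos_ne_zero'' (hθlt w hw))).comp w
      ((differentiableAt_const _).mul (hFd w hw).differentiableAt)
  have hGmaps : Set.MapsTo G (ball (0:ℂ) 1) (ball (0:ℂ) 1) := by
    intro w hw
    rw [mem_ball_zero_iff]
    exact abs_tan_lt_one (hθlt w hw)
  have hG0 : G 0 = 0 := by
    simp [hG, hF0]
  intro z hz
  have hz' : ‖z‖ < 1 := by
    exact mem_ball_zero_iff.1 hz
  have hSch : ‖G z‖ ≤ ‖z‖ :=
    Complex.norm_le_norm_of_mapsTo_ball hGdiff (hGmaps.mono_right ball_subset_closedBall) hG0 hz'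
  by_cases hcase : (g z).re ≤ 0
  · have h1 : 0 ≤ arctan ‖z‖ := by
      rw [← Real.arctan_zero]
      exact Real.arctan_strictMono.monotone (norm_nonneg z)
    nlinarith [pi_pos]
  · push_neg at hcase
    have hu1 : |(g z).re| < 1 := lt_of_le_of_lt (Complex.abs_re_le_norm (g z)) (hb z hz)
    have hθz := hθlt z hz
    have h0re : 0 ≤ ((↑(π/4):ℂ) * F z).re := by
      rw [hθre, hre z hz]
      have := pi_pos
      nlinarith
    have htle := real_tan_le_abs_tan hθz h0re
    have h2 : Real.tan (π/4 * (g z).re) ≤ ‖z‖ := by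
      have e1 : ((↑(π/4):ℂ) * F z).re = π/4 * (g z).re := by
        rw [hθre, hre z hz]
      rw [← e1]
      exact le_trans htle hSch
    have habs1 : (g z).re < 1 := lt_of_le_of_lt (le_abs_self _) hu1
    have h3 : π/4 * (g z).re < π/2 := by nlinarith [pi_pos]
    have h4 : -(π/2) < π/4 * (g z).re := by nlinarith [pi_pos]
    calc π/4 * (g z).re = arctan (Real.tan (π/4 * (g z).re)) :=
          (Real.arctan_tan h4 h3).symm
      _ ≤ arctan ‖z‖ := Real.arctan_strictMono.monotone h2

lemma lap_const_mul (f : ℂ → ℂ) (c : ℂ) (hf : ContDiffOn ℝ 2 f (ball (0:ℂ) 1)) :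
    ∀ z ∈ ball (0:ℂ) 1, lap (fun w => c * f w) z = c * lap f z := by
  intro z hz
  have hball : IsOpen (ball (0:ℂ) 1) := isOpen_ball
  have hfd : ∀ w ∈ ball (0:ℂ) 1, DifferentiableAt ℝ f w := fun w hw =>
    (hf.contDiffAt (hball.mem_nhds hw)).differentiableAt (by norm_num)
  have hDfd : DifferentiableAt ℝ (fun w => fderiv ℝ f w) z :=
    ((hf.contDiffAt (hball.mem_nhds hz)).fderiv_right (m := 1) (by norm_num)).differentiableAt (by norm_num)
  have key : ∀ v : ℂ, fderiv ℝ (fun w => fderiv ℝ (fun y => c * f y) w v) z v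
      = c * fderiv ℝ (fun w => fderiv ℝ f w v) z v := by
    intro v
    have hev : (fun w => fderiv ℝ (fun y => c * f y) w v) =ᶠ[nhds z]
        (fun w => c * fderiv ℝ f w v) := by
      filter_upwards [hball.mem_nhds hz] with y hy
      rw [fderiv_const_mul (hfd y hy) c]
      simp
    have hu : DifferentiableAt ℝ (fun w => fderiv ℝ f w v) z :=
      (ContinuousLinearMap.apply ℝ ℂ v).differentiableAt.comp z hDfd
    rw [Filter.EventuallyEq.fderiv_eq hev, fderiv_const_mul hu c]
    simp
  unfold lap
  rw [key 1, key Complex.I]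
  ring

theorem harmonic_schwarz_pick (f : ℂ → ℂ)
    (hsmooth : ContDiffOn ℝ 2 f (Metric.ball (0 : ℂ) 1))
    (hharm : ∀ z ∈ Metric.ball (0 : ℂ) 1, lap f z = 0)
    (hmaps : ∀ z ∈ Metric.ball (0 : ℂ) 1, ‖f z‖ < 1)
    (h0 : f 0 = 0) :
    ∀ z ∈ Metric.ball (0 : ℂ) 1,
      (1 - ‖z‖ ^ 2) / (1 - ‖f z‖ ^ 2) ≤ π / 2 := by
  intro z hz
  have hp := pi_pos
  have hz1 : ‖z‖ < 1 := by
    exact mem_ball_zero_iff.1 hz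
  have hz0 : 0 ≤ ‖z‖ := norm_nonneg z
  have hfz : ‖f z‖ < 1 := hmaps z hz
  have hfz0 : 0 ≤ ‖f z‖ := norm_nonneg (f z)
  have hden : 0 < 1 - ‖f z‖ ^ 2 := by nlinarith
  rw [div_le_iff₀ hden]
  by_cases hzero : f z = 0
  · rw [hzero]
    simp only [norm_zero]
    nlinarith [pi_gt_three, sq_nonneg ‖z‖]
  · have habsne : (‖f z‖ : ℝ) ≠ 0 := by
      simpa using hzero
    set c : ℂ := (starRingEnd ℂ) (f z) / ((‖f z‖ : ℝ) : ℂ) with hc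
    set g : ℂ → ℂ := fun w => c * f w with hg
    have habsc : ‖c‖ = 1 := by
      rw [hc, norm_div]
      simp only [Complex.norm_conj, Complex.norm_real, Real.norm_eq_abs, abs_of_nonneg hfz0]
      field_simp
    have hgsmooth : ContDiffOn ℝ 2 g (ball (0:ℂ) 1) := contDiffOn_const.mul hsmooth
    have hglap : ∀ w ∈ ball (0:ℂ) 1, lap g w = 0 := by
      intro w hw
      rw [hg, lap_const_mul f c hsmooth w hw, hharm w hw, mul_zero]
    have hgb : ∀ w ∈ ball (0:ℂ) 1, ‖g w‖ < 1 := by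
      intro w hw
      rw [hg]
      simp only [norm_mul, habsc, one_mul]
      exact hmaps w hw
    have hg0 : g 0 = 0 := by rw [hg]; simp [h0]
    have hmain := heinz_re g hgsmooth hglap hgb hg0 z hz
    have hgz : g z = ((‖f z‖ : ℝ) : ℂ) := by
      show c * f z = _
      rw [hc, div_mul_eq_mul_div, mul_comm, Complex.mul_conj, Complex.normSq_eq_norm_sq]
      have hne : ((‖f z‖ : ℝ) : ℂ) ≠ 0 := by
        simpa using habsne
      push_cast
      rw [pow_two, mul_div_assoc, div_self hne, mul_one]
    rw [hgz, Complex.ofReal_re] at hmain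
    -- final numeric step
    set s : ℝ := ‖f z‖ with hs
    set r : ℝ := ‖z‖ with hr
    set a : ℝ := arctan r with ha
    have ha0 : 0 ≤ a := by
      rw [ha, ← Real.arctan_zero]
      exact Real.arctan_strictMono.monotone hz0
    have hphi := phi_nonneg r ⟨hz0, hz1.le⟩
    have hsle : s ≤ 4/π * a := by
      have h' := mul_le_mul_of_nonneg_left hmain (by positivity : (0:ℝ) ≤ 4/π)
      calc s = 4/π * (π/4 * s) := by field_simp
        _ ≤ 4/π * a := h'
    have hs2 : s^2 ≤ (4/π * a)^2 := by
      apply pow_le_pow_left₀ hfz0 hsle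
    have hfin : π/2 - 8/π * a^2 ≤ π/2 * (1 - s^2) := by
      have hq : π/2 * ((4/π * a)^2) = 8/π * a^2 := by
        field_simp
        ring
      nlinarith
    linarith
end

section
/- Suppose a, b, M ≥ 0, and for all z ∈ 𝔻, |f(z)| ≤ (4/π)arctan|z| + ((1−|z|²)/(1+|z|²))(b + |z|²a) + (4/π)a(1−|z|²)arctan|z| + b(1−|z|²)². If additionally |f(z)| < 1 and 2/π − 4(a+b) > 0, then (1−|z|)/(1−|f(z)|) ≤ 1/(2/π − 4(a+b)) for all z ∈ 𝔻. -/
open Real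

lemma my_arctan_nonneg {x : ℝ} (hx : 0 ≤ x) : 0 ≤ Real.arctan x := by
  have := Real.arctan_strictMono.monotone hx
  simpa using this

lemma arctan_ge_aux {t : ℝ} (ht : 0 ≤ t) : t / (1 + t ^ 2) ≤ Real.arctan t := by
  have h1 : Real.sin (Real.arctan t) ≤ Real.arctan t :=
    Real.sin_le (my_arctan_nonneg ht)
  rw [Real.sin_arctan] at h1
  refine le_trans ?_ h1
  have hs : Real.sqrt (1 + t ^ 2) ≤ 1 + t ^ 2 := by
    nlinarith [Real.sq_sqrt (by positivity : (0:ℝ) ≤ 1 + t ^ 2),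
      Real.sqrt_nonneg (1 + t ^ 2)]
  exact div_le_div_of_nonneg_left ht (by positivity) hs

lemma arctan_key_s13 {r : ℝ} (hr0 : 0 ≤ r) (hr1 : r < 1) :
    Real.arctan r ≤ π / 4 - (1 - r) / 2 := by
  have hden : (0:ℝ) < 1 + r := by linarith
  set t : ℝ := (1 - r) / (1 + r) with ht
  have ht0 : 0 ≤ t := by
    rw [ht]; exact div_nonneg (by linarith) (by linarith)
  have hmul : r * t < 1 := by
    have h1 : r * t = r * (1 - r) / (1 + r) := by rw [ht]; ring
    rw [h1, div_lt_one hden]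
    nlinarith
  have hadd := Real.arctan_add hmul
  have hone : (r + t) / (1 - r * t) = 1 := by
    rw [div_eq_one_iff_eq (by nlinarith [mul_nonneg hr0 ht0] : (1:ℝ) - r * t ≠ 0), ht]
    field_simp
    ring
  rw [hone, Real.arctan_one] at hadd
  have heq : t / (1 + t ^ 2) = (1 - r ^ 2) / (2 * (1 + r ^ 2)) := by
    rw [ht, div_eq_div_iff (by positivity) (by positivity)]
    field_simp
    ring
  have hlow : (1 - r) / 2 ≤ Real.arctan t := by
    refine le_trans ?_ (arctan_ge_aux ht0)
    rw [heq, div_le_div_iff₀ two_pos (by positivity)]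
    nlinarith [mul_nonneg (mul_nonneg hr0 (by linarith : (0:ℝ) ≤ 1 - r))
      (by linarith : (0:ℝ) ≤ 1 - r)]
  linarith

set_option maxHeartbeats 1000000 in
lemma real_key (a b r F : ℝ) (ha : 0 ≤ a) (hb : 0 ≤ b) (hr0 : 0 ≤ r) (hr1 : r < 1)
    (hF1 : F < 1)
    (hFb : F ≤ (4 / π) * Real.arctan r +
        ((1 - r ^ 2) / (1 + r ^ 2)) * (b + r ^ 2 * a) +
        (4 / π) * a * (1 - r ^ 2) * Real.arctan r + b * (1 - r ^ 2) ^ 2)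
    (hc : 0 < 2 / π - 4 * (a + b)) :
    (1 - r) / (1 - F) ≤ 1 / (2 / π - 4 * (a + b)) := by
  have hπ : (0:ℝ) < π := Real.pi_pos
  have h1r2 : (0:ℝ) ≤ 1 - r ^ 2 := by nlinarith
  obtain ⟨A, hA⟩ : ∃ A : ℝ, A = Real.arctan r := ⟨_, rfl⟩
  obtain ⟨q, hq⟩ : ∃ q : ℝ, q = (1 - r ^ 2) / (1 + r ^ 2) := ⟨_, rfl⟩
  rw [← hA, ← hq] at hFb
  have hA0 : 0 ≤ A := hA ▸ my_arctan_nonneg hr0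
  have hkey : A ≤ π / 4 - (1 - r) / 2 := hA ▸ arctan_key_s13 hr0 hr1
  have hA14 : A ≤ π / 4 := by linarith
  have h4A : (4 / π) * A ≤ 1 - (2 / π) * (1 - r) := by
    have h := mul_le_mul_of_nonneg_left hkey (by positivity : (0:ℝ) ≤ 4 / π)
    have heq : (4 / π) * (π / 4 - (1 - r) / 2) = 1 - (2 / π) * (1 - r) := by
      field_simp
      ring
    linarith [heq ▸ h]
  have hcoef : (0:ℝ) ≤ (4 / π) * a * (1 - r ^ 2) :=
    mul_nonneg (mul_nonneg (by positivity) ha) h1r2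
  have h4aA : (4 / π) * a * (1 - r ^ 2) * A ≤ a * (1 - r ^ 2) := by
    have h := mul_le_mul_of_nonneg_left hA14 hcoef
    have heq : (4 / π) * a * (1 - r ^ 2) * (π / 4) = a * (1 - r ^ 2) := by
      field_simp
    linarith [heq ▸ h]
  have hq0 : 0 ≤ q := by rw [hq]; positivity
  have hq1 : q ≤ 1 - r ^ 2 := by
    rw [hq, div_le_iff₀ (by positivity : (0:ℝ) < 1 + r ^ 2)]
    nlinarith [mul_nonneg h1r2 (sq_nonneg r)]
  have hqb : q + (1 - r ^ 2) ^ 2 ≤ 2 * (1 - r ^ 2) := by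
    rw [hq, div_add' _ _ _ (by positivity : (1:ℝ) + r ^ 2 ≠ 0),
      div_le_iff₀ (by positivity : (0:ℝ) < 1 + r ^ 2)]
    nlinarith [mul_nonneg (mul_nonneg h1r2 (sq_nonneg r)) (by positivity : (0:ℝ) ≤ r ^ 2 + 2)]
  have hqterm : q * (b + r ^ 2 * a) + a * (1 - r ^ 2) + b * (1 - r ^ 2) ^ 2
      ≤ 4 * (a + b) * (1 - r) := by
    have hqr2 : q * r ^ 2 ≤ 1 - r ^ 2 :=
      (mul_le_of_le_one_right hq0 (by nlinarith)).trans hq1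
    have h1 : q * (r ^ 2 * a) ≤ (1 - r ^ 2) * a := by
      calc q * (r ^ 2 * a) = q * r ^ 2 * a := by ring
        _ ≤ (1 - r ^ 2) * a := mul_le_mul_of_nonneg_right hqr2 ha
    have h2 : q * b + b * (1 - r ^ 2) ^ 2 ≤ 2 * (1 - r ^ 2) * b := by
      calc q * b + b * (1 - r ^ 2) ^ 2 = (q + (1 - r ^ 2) ^ 2) * b := by ring
        _ ≤ 2 * (1 - r ^ 2) * b := mul_le_mul_of_nonneg_right hqb hb
    have h3 : 2 * (1 - r ^ 2) * (a + b) ≤ 4 * (a + b) * (1 - r) := by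
      nlinarith [mul_nonneg (add_nonneg ha hb) (sq_nonneg (1 - r))]
    have hsplit : q * (b + r ^ 2 * a) = q * b + q * (r ^ 2 * a) := by ring
    linarith
  have hFle : F ≤ 1 - (1 - r) * (2 / π - 4 * (a + b)) := by
    nlinarith [hFb, h4A, h4aA, hqterm]
  rw [div_le_div_iff₀ (by linarith : (0:ℝ) < 1 - F) hc]
  nlinarith [hFle]

theorem schwarz_pick_q_one (f : ℂ → ℂ) (a b : ℝ) (ha : 0 ≤ a) (hb : 0 ≤ b)
    (hbound : ∀ z ∈ Metric.ball (0 : ℂ) 1,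
      ‖f z‖ ≤ (4 / π) * Real.arctan (‖z‖) +
        ((1 - ‖z‖ ^ 2) / (1 + ‖z‖ ^ 2)) * (b + ‖z‖ ^ 2 * a) +
        (4 / π) * a * (1 - ‖z‖ ^ 2) * Real.arctan (‖z‖) +
        b * (1 - ‖z‖ ^ 2) ^ 2)
    (hlt : ∀ z ∈ Metric.ball (0 : ℂ) 1, ‖f z‖ < 1)
    (hc : 0 < 2 / π - 4 * (a + b)) :
    ∀ z ∈ Metric.ball (0 : ℂ) 1,
      (1 - ‖z‖) / (1 - ‖f z‖)
        ≤ 1 / (2 / π - 4 * (a + b)) := by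
  intro z hz
  have hr1 : ‖z‖ < 1 := by
    simpa [Complex.dist_eq] using hz
  exact real_key a b (‖z‖) (‖f z‖) ha hb (norm_nonneg z) hr1
    (hlt z hz) (hbound z hz) hc
end

section
/- Let f : 𝔻 → 𝔻 satisfy: (i) there is M₁ ≥ 2/π with |f(z₁)−f(z₂)| ≤ M₁|z₁−z₂| for all z₁,z₂ ∈ 𝔻, and (ii) there is c > 0 with (1−|z|)/(1−|f(z)|) ≤ 1/c for all z ∈ 𝔻. Then for all z₁, z₂ ∈ 𝔻, j(f(z₁), f(z₂)) ≤ (M₁/c)·j(z₁, z₂), where j(w₁,w₂) = log(1 + |w₁−w₂|/min(1−|w₁|, 1−|w₂|)) is the distance ratio metric on 𝔻. -/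
open Real

private lemma bern_log {p x : ℝ} (hp : 1 ≤ p) (hx : 0 ≤ x) :
    Real.log (1 + p * x) ≤ p * Real.log (1 + x) := by
  have h1 : (0:ℝ) < 1 + x := by linarith
  have h2 : (0:ℝ) < 1 + p * x := by nlinarith
  have hb : 1 + p * x ≤ (1 + x) ^ p :=
    one_add_mul_self_le_rpow_one_add (by linarith : (-1:ℝ) ≤ x) hp
  calc Real.log (1 + p * x) ≤ Real.log ((1 + x) ^ p) :=
        (Real.log_le_log_iff h2 (by positivity)).mpr hb
    _ = p * Real.log (1 + x) := Real.log_rpow h1 p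

private lemma artanh_key {M c s : ℝ} (hM : 0 < M) (hMc : M < c) (hs : 0 ≤ s) (hs1 : s < 1) :
    Real.log (c + M * s) - Real.log (c - M * s) ≤
      (M / c) * (Real.log (1 + s) - Real.log (1 - s)) := by
  set G : ℝ → ℝ := fun x =>
    M / c * (Real.log (1 + x) - Real.log (1 - x)) -
      (Real.log (c + M * x) - Real.log (c - M * x)) with hGdef
  have hc : (0:ℝ) < c := hM.trans hMc
  have hG : ∀ x ∈ Set.Icc (0:ℝ) s,
      HasDerivAt G
        (M / c * (1 / (1 + x) - -1 / (1 - x)) -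
          (M * 1 / (c + M * x) - -(M * 1) / (c - M * x))) x := by
    intro x hx
    obtain ⟨hx0, hxs⟩ := hx
    have h1 : (0:ℝ) < 1 + x := by linarith
    have h2 : (0:ℝ) < 1 - x := by linarith
    have h3 : (0:ℝ) < c + M * x := by nlinarith
    have h4 : (0:ℝ) < c - M * x := by nlinarith
    have d1 : HasDerivAt (fun x : ℝ => Real.log (1 + x)) (1 / (1 + x)) x :=
      ((hasDerivAt_id x).const_add 1).log h1.ne'
    have d2 : HasDerivAt (fun x : ℝ => Real.log (1 - x)) (-1 / (1 - x)) x :=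
      ((hasDerivAt_id x).const_sub 1).log h2.ne'
    have d3 : HasDerivAt (fun x : ℝ => Real.log (c + M * x)) (M * 1 / (c + M * x)) x :=
      (((hasDerivAt_id x).const_mul M).const_add c).log h3.ne'
    have d4 : HasDerivAt (fun x : ℝ => Real.log (c - M * x)) (-(M * 1) / (c - M * x)) x :=
      (((hasDerivAt_id x).const_mul M).const_sub c).log h4.ne'
    exact ((d1.sub d2).const_mul (M / c)).sub (d3.sub d4)
  have hmono : MonotoneOn G (Set.Icc 0 s) := by
    apply monotoneOn_of_deriv_nonneg (convex_Icc 0 s)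
    · exact fun x hx => (hG x hx).continuousAt.continuousWithinAt
    · exact fun x hx =>
        ((hG x (interior_subset hx)).differentiableAt).differentiableWithinAt
    · intro x hx
      have hx' := interior_subset hx
      rw [(hG x hx').deriv]
      obtain ⟨hx0, hxs⟩ := hx'
      have h1 : (0:ℝ) < 1 + x := by linarith
      have h2 : (0:ℝ) < 1 - x := by linarith
      have h3 : (0:ℝ) < c + M * x := by nlinarith
      have h4 : (0:ℝ) < c - M * x := by nlinarith
      have key : M / c * (1 / (1 + x) - -1 / (1 - x)) -
          (M * 1 / (c + M * x) - -(M * 1) / (c - M * x)) =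
          2 * M * ((c ^ 2 - M ^ 2) * x ^ 2) /
            (c * ((1 + x) * (1 - x)) * ((c + M * x) * (c - M * x))) := by
        field_simp
        ring
      rw [key]
      apply div_nonneg
      · have h5 : (0:ℝ) ≤ c ^ 2 - M ^ 2 := by nlinarith
        exact mul_nonneg (by positivity) (mul_nonneg h5 (sq_nonneg x))
      · positivity
  have h0s : (0:ℝ) ∈ Set.Icc (0:ℝ) s := ⟨le_refl 0, hs⟩
  have hss : s ∈ Set.Icc (0:ℝ) s := ⟨hs, le_refl s⟩
  have := hmono h0s hss hs
  have hG0 : G 0 = 0 := by simp [hGdef]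
  rw [hG0] at this
  simp only [hGdef] at this
  linarith

private lemma case2_key {M c m t : ℝ} (hM : 0 < M) (hMc : M < c) (hm : 0 < m)
    (ht : 0 ≤ t) (ht2 : t ≤ 2 * (1 - m)) :
    Real.log (1 + M * t / (c - M + M * m)) ≤ (M / c) * Real.log (1 + t / m) := by
  have hc : (0:ℝ) < c := hM.trans hMc
  have hm1 : m ≤ 1 := by nlinarith
  set E : ℝ := c - M + M * m with hEdef
  have hE : (0:ℝ) < E := by nlinarith
  set F : ℝ → ℝ := fun x => M / c * Real.log (m + x) - Real.log (E + M * x) with hFdef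
  have hF : ∀ x : ℝ, 0 ≤ x →
      HasDerivAt F (M / c * (1 / (m + x)) - M * 1 / (E + M * x)) x := by
    intro x hx0
    have h1 : (0:ℝ) < m + x := by linarith
    have h2 : (0:ℝ) < E + M * x := by nlinarith
    have d1 : HasDerivAt (fun x : ℝ => Real.log (m + x)) (1 / (m + x)) x :=
      ((hasDerivAt_id x).const_add m).log h1.ne'
    have d2 : HasDerivAt (fun x : ℝ => Real.log (E + M * x)) (M * 1 / (E + M * x)) x :=
      (((hasDerivAt_id x).const_mul M).const_add E).log h2.ne'
    exact (d1.const_mul (M / c)).sub d2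
  have hderiv_eq : ∀ x : ℝ, 0 ≤ x →
      M / c * (1 / (m + x)) - M * 1 / (E + M * x) =
        M * ((c - M) * (1 - m - x)) / (c * (m + x) * (E + M * x)) := by
    intro x hx0
    have h1 : (0:ℝ) < m + x := by linarith
    have h2 : (0:ℝ) < E + M * x := by nlinarith
    field_simp
    ring
  -- key: F 0 ≤ F t
  have hkey : F 0 ≤ F t := by
    rcases le_or_gt t (1 - m) with hcase | hcase
    · -- monotone on [0, 1-m]
      have hmono : MonotoneOn F (Set.Icc 0 (1 - m)) := by
        apply monotoneOn_of_deriv_nonneg (convex_Icc 0 (1 - m))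
        · exact fun x hx => (hF x hx.1).continuousAt.continuousWithinAt
        · exact fun x hx =>
            ((hF x (interior_subset hx).1).differentiableAt).differentiableWithinAt
        · intro x hx
          obtain ⟨hx0, hx1⟩ := interior_subset hx
          rw [(hF x hx0).deriv, hderiv_eq x hx0]
          apply div_nonneg
          · exact mul_nonneg hM.le (mul_nonneg (by linarith) (by linarith))
          · have h1 : (0:ℝ) < m + x := by linarith
            have h2 : (0:ℝ) < E + M * x := by nlinarith
            positivity
      exact hmono ⟨le_refl 0, by linarith⟩ ⟨ht, hcase⟩ ht
    · -- antitone on [1-m, 2(1-m)], plus endpoint value via artanh_key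
      have hanti : AntitoneOn F (Set.Icc (1 - m) (2 * (1 - m))) := by
        apply antitoneOn_of_deriv_nonpos (convex_Icc _ _)
        · intro x hx
          have hx0 : (0:ℝ) ≤ x := le_trans (by linarith) hx.1
          exact (hF x hx0).continuousAt.continuousWithinAt
        · intro x hx
          have hx0 : (0:ℝ) ≤ x := le_trans (by linarith) (interior_subset hx).1
          exact ((hF x hx0).differentiableAt).differentiableWithinAt
        · intro x hx
          obtain ⟨hx1, hx2⟩ := interior_subset hx
          have hx0 : (0:ℝ) ≤ x := by linarith
          rw [(hF x hx0).deriv, hderiv_eq x hx0]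
          rw [div_nonpos_iff]
          right
          constructor
          · have : 1 - m - x ≤ 0 := by linarith
            exact mul_nonpos_of_nonneg_of_nonpos hM.le
              (mul_nonpos_of_nonneg_of_nonpos (by linarith) this)
          · have h1 : (0:ℝ) < m + x := by linarith
            have h2 : (0:ℝ) < E + M * x := by nlinarith
            positivity
      have h1 : F t ≥ F (2 * (1 - m)) := by
        apply hanti ⟨hcase.le, ht2⟩ ⟨by linarith, le_refl _⟩ ht2
      have h2 : F 0 ≤ F (2 * (1 - m)) := by
        have hs0 : (0:ℝ) ≤ 1 - m := by linarith
        have hs1 : 1 - m < 1 := by linarith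
        have hart := artanh_key hM hMc hs0 hs1
        have e1 : m + 2 * (1 - m) = 1 + (1 - m) := by ring
        have e2 : E + M * (2 * (1 - m)) = c + M * (1 - m) := by rw [hEdef]; ring
        have e3 : E = c - M * (1 - m) := by rw [hEdef]; ring
        have e4 : m = 1 - (1 - m) := by ring
        simp only [hFdef, add_zero, mul_zero]
        rw [e1, e2]
        have e3' : c - M * (1 - m) = E := by rw [hEdef]; ring
        have e4' : 1 - (1 - m) = m := by ring
        rw [e3', e4'] at hart
        linarith
      linarith
  -- convert goal
  have h1 : (0:ℝ) < m + t := by linarith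
  have h2 : (0:ℝ) < E + M * t := by nlinarith
  have e1 : 1 + M * t / E = (E + M * t) / E := by field_simp
  have e2 : 1 + t / m = (m + t) / m := by field_simp
  rw [e1, e2, Real.log_div h2.ne' hE.ne', Real.log_div h1.ne' hm.ne', mul_sub]
  simp only [hFdef, add_zero, mul_zero] at hkey
  linarith

theorem lipschitz_distance_ratio_metric (f : ℂ → ℂ) (M₁ c : ℝ)
    (hM₁ : 2 / π ≤ M₁) (hc : 0 < c)
    (hmaps : ∀ z ∈ Metric.ball (0 : ℂ) 1, ‖f z‖ < 1)
    (hlip : ∀ z₁ ∈ Metric.ball (0 : ℂ) 1, ∀ z₂ ∈ Metric.ball (0 : ℂ) 1,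
      ‖f z₁ - f z₂‖ ≤ M₁ * ‖z₁ - z₂‖)
    (hratio : ∀ z ∈ Metric.ball (0 : ℂ) 1,
      (1 - ‖z‖) / (1 - ‖f z‖) ≤ 1 / c) :
    ∀ z₁ ∈ Metric.ball (0 : ℂ) 1, ∀ z₂ ∈ Metric.ball (0 : ℂ) 1,
      Real.log (1 + ‖f z₁ - f z₂‖ /
          min (1 - ‖f z₁‖) (1 - ‖f z₂‖))
        ≤ (M₁ / c) *
          Real.log (1 + ‖z₁ - z₂‖ /
            min (1 - ‖z₁‖) (1 - ‖z₂‖)) := by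
  intro z₁ hz₁ z₂ hz₂
  have hM : (0:ℝ) < M₁ := lt_of_lt_of_le (by positivity) hM₁
  have hr₁ : ‖z₁‖ < 1 := by
    simpa using mem_ball_zero_iff.mp hz₁
  have hr₂ : ‖z₂‖ < 1 := by
    simpa using mem_ball_zero_iff.mp hz₂
  have he₁ : (0:ℝ) < 1 - ‖f z₁‖ := by linarith [hmaps z₁ hz₁]
  have he₂ : (0:ℝ) < 1 - ‖f z₂‖ := by linarith [hmaps z₂ hz₂]
  set a := ‖f z₁ - f z₂‖ with hadef
  set t := ‖z₁ - z₂‖ with htdef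
  set m := min (1 - ‖z₁‖) (1 - ‖z₂‖) with hmdef
  set mf := min (1 - ‖f z₁‖) (1 - ‖f z₂‖) with hmfdef
  have hm : (0:ℝ) < m := lt_min (by linarith) (by linarith)
  have hmf : (0:ℝ) < mf := lt_min he₁ he₂
  have ha0 : (0:ℝ) ≤ a := norm_nonneg _
  have ht0 : (0:ℝ) ≤ t := norm_nonneg _
  have haMt : a ≤ M₁ * t := hlip z₁ hz₁ z₂ hz₂
  have hratio' : ∀ z ∈ Metric.ball (0 : ℂ) 1,
      c * (1 - ‖z‖) ≤ 1 - ‖f z‖ := by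
    intro z hz
    have hez : (0:ℝ) < 1 - ‖f z‖ := by linarith [hmaps z hz]
    have := hratio z hz
    rw [div_le_div_iff₀ hez hc] at this
    linarith
  have hcm : c * m ≤ mf := by
    apply le_min
    · calc c * m ≤ c * (1 - ‖z₁‖) :=
            mul_le_mul_of_nonneg_left (min_le_left _ _) hc.le
        _ ≤ 1 - ‖f z₁‖ := hratio' z₁ hz₁
    · calc c * m ≤ c * (1 - ‖z₂‖) :=
            mul_le_mul_of_nonneg_left (min_le_right _ _) hc.le
        _ ≤ 1 - ‖f z₂‖ := hratio' z₂ hz₂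
  rcases le_or_gt c M₁ with hcM | hcM
  · -- Case 1 : c ≤ M₁, use Bernoulli
    have hsub : a / mf ≤ (M₁ / c) * (t / m) := by
      rw [div_mul_div_comm]
      exact div_le_div₀ (by positivity) haMt (by positivity) hcm
    have h2 : Real.log (1 + a / mf) ≤ Real.log (1 + M₁ / c * (t / m)) :=
      (Real.log_le_log_iff (by positivity) (by positivity)).mpr (by linarith)
    have h3 := bern_log ((one_le_div hc).mpr hcM) (by positivity : (0:ℝ) ≤ t / m)
    linarith
  · -- Case 2 : M₁ < c
    have h0mem : (0:ℂ) ∈ Metric.ball (0:ℂ) 1 := by simp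
    have hf0 : c ≤ 1 - ‖f 0‖ := by
      have := hratio' 0 h0mem
      simpa using this
    have hE : ∀ z ∈ Metric.ball (0:ℂ) 1,
        c - M₁ + M₁ * (1 - ‖z‖) ≤ 1 - ‖f z‖ := by
      intro z hz
      have h1 : ‖f z‖ ≤ ‖f z - f 0‖ + ‖f 0‖ := by
        calc ‖f z‖ = ‖f z - f 0 + f 0‖ := by
              rw [sub_add_cancel]
          _ ≤ _ := norm_add_le _ _
      have h2 : ‖f z - f 0‖ ≤ M₁ * ‖z‖ := by
        simpa using hlip z hz 0 h0mem
      nlinarith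
    have hm1 : m ≤ 1 - ‖z₁‖ := min_le_left _ _
    have hm2 : m ≤ 1 - ‖z₂‖ := min_le_right _ _
    have hmfE : c - M₁ + M₁ * m ≤ mf := by
      apply le_min
      · have := hE z₁ hz₁
        nlinarith
      · have := hE z₂ hz₂
        nlinarith
    have ht2 : t ≤ 2 * (1 - m) := by
      have habs : t ≤ ‖z₁‖ + ‖z₂‖ := by
        simpa [htdef] using norm_sub_le z₁ z₂
      linarith
    have hkey := case2_key hM hcM hm ht0 ht2
    have hEpos : (0:ℝ) < c - M₁ + M₁ * m := by nlinarith
    have hchain : Real.log (1 + a / mf) ≤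
        Real.log (1 + M₁ * t / (c - M₁ + M₁ * m)) := by
      apply (Real.log_le_log_iff (by positivity) (by positivity)).mpr
      have : a / mf ≤ M₁ * t / (c - M₁ + M₁ * m) :=
        div_le_div₀ (by positivity) haMt hEpos hmfE
      linarith
    linarith
end
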